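/- Let σ ≥ 1 be an integer, let m < n be nonnegative integers, let f : ℝ → ℝ be 1-periodic, integrable on [0,1], and mean-zero (∫₀¹ f(s) ds = 0), and let a : [m/σ, n/σ] → ℝ be Lipschitz with Lipschitz constant K. Then |∫_{m/σ}^{n/σ} a(t) f(σt) dt| ≤ ((n − m)/σ²) · K · ∫₀¹ |f(s)| ds. -/

import Mathlib

open MeasureTheory

/-- Decorrelation estimate: if `f` is `1`-periodic, integrable and mean-zero on `[0,1]`,
and `a` is `K`-Lipschitz on `[m/σ, n/σ]`, then
`|∫_{m/σ}^{n/σ} a(t) f(σt) dt| ≤ ((n−m)/σ²)·K·∫₀¹ |f|`. -/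
theorem fast_oscillation_decorrelation
    (σ : ℕ) (hσ : 1 ≤ σ) (m n : ℕ) (hmn : m < n)
    (f : ℝ → ℝ)
    (hper : ∀ s, f (s + 1) = f s)
    (hint : IntegrableOn f (Set.Icc (0 : ℝ) 1))
    (hmean : (∫ s in (0 : ℝ)..1, f s) = 0)
    (a : ℝ → ℝ) (K : ℝ)
    (hlip : ∀ t ∈ Set.Icc ((m : ℝ) / σ) ((n : ℝ) / σ),
      ∀ t' ∈ Set.Icc ((m : ℝ) / σ) ((n : ℝ) / σ), |a t - a t'| ≤ K * |t - t'|) :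
    |∫ t in ((m : ℝ) / σ)..((n : ℝ) / σ), a t * f ((σ : ℝ) * t)|
      ≤ (((n : ℝ) - m) / (σ : ℝ) ^ 2) * K * ∫ s in (0 : ℝ)..1, |f s| := by
  have hσpos : (0:ℝ) < σ := by exact_mod_cast hσ
  have hσne : (σ:ℝ) ≠ 0 := ne_of_gt hσpos
  set I : ℝ := ∫ s in (0:ℝ)..1, |f s| with hI
  have hP : Function.Periodic f 1 := hper
  have hPabs : Function.Periodic (fun s => |f s|) 1 := fun s => by simp [hper s]
  -- basic integrability of f on [0,1]
  have hf01 : IntervalIntegrable f volume 0 1 := by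
    rw [intervalIntegrable_iff_integrableOn_Icc_of_le zero_le_one]
    exact hint
  -- shift invariance
  have hshift : ∀ (j : ℕ) (x : ℝ), f (x + j) = f x := by
    intro j
    induction j with
    | zero => simp
    | succ j ih =>
      intro x
      have h1 : x + ((j:ℝ) + 1) = (x + j) + 1 := by ring
      rw [Nat.cast_succ, h1, hper, ih]
  have hfj : ∀ j : ℕ, IntervalIntegrable f volume j ((j:ℝ)+1) := by
    intro j
    have h := hf01.comp_add_right (-(j:ℝ))
    have heq : (fun x => f (x + -(j:ℝ))) = f := by
      funext x
      simpa using (hshift j (x + -(j:ℝ))).symm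
    have e1 : (0:ℝ) - -(j:ℝ) = (j:ℝ) := by ring
    have e2 : (1:ℝ) - -(j:ℝ) = (j:ℝ) + 1 := by ring
    rwa [heq, e1, e2] at h
  have hfjabs : ∀ j : ℕ, IntervalIntegrable (fun s => |f s|) volume j ((j:ℝ)+1) :=
    fun j => (hfj j).abs
  -- integrals over [j, j+1]
  have hmeanj : ∀ j : ℕ, (∫ s in (j:ℝ)..((j:ℝ)+1), f s) = 0 := by
    intro j
    rw [hP.intervalIntegral_add_eq (j:ℝ) 0]
    simpa using hmean
  have habsj : ∀ j : ℕ, (∫ s in (j:ℝ)..((j:ℝ)+1), |f s|) = I := by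
    intro j
    rw [hPabs.intervalIntegral_add_eq (j:ℝ) 0]
    simp [hI]
  -- K ≥ 0
  have hmnR : (m:ℝ) < n := by exact_mod_cast hmn
  have hK0 : 0 ≤ K := by
    have hmem1 : ((m:ℝ)/σ) ∈ Set.Icc ((m:ℝ)/σ) ((n:ℝ)/σ) :=
      ⟨le_refl _, (div_le_div_iff_of_pos_right hσpos).2 hmnR.le⟩
    have hmem2 : ((n:ℝ)/σ) ∈ Set.Icc ((m:ℝ)/σ) ((n:ℝ)/σ) :=
      ⟨(div_le_div_iff_of_pos_right hσpos).2 hmnR.le, le_refl _⟩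
    have h := hlip _ hmem1 _ hmem2
    have hlt : (m:ℝ)/σ < (n:ℝ)/σ := (div_lt_div_iff_of_pos_right hσpos).2 hmnR
    have hd : 0 < |(m:ℝ)/σ - (n:ℝ)/σ| := by
      rw [abs_sub_comm, abs_of_pos (by linarith)]
      linarith
    nlinarith [abs_nonneg (a ((m:ℝ)/σ) - a ((n:ℝ)/σ))]
  -- I ≥ 0
  have hI0 : 0 ≤ I := by
    rw [hI]
    apply intervalIntegral.integral_nonneg zero_le_one
    intro x _; exact abs_nonneg _
  -- continuity of a on the big interval
  have hacont : ContinuousOn a (Set.Icc ((m:ℝ)/σ) ((n:ℝ)/σ)) := by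
    have hLip : LipschitzOnWith (Real.toNNReal K) a (Set.Icc ((m:ℝ)/σ) ((n:ℝ)/σ)) := by
      rw [lipschitzOnWith_iff_dist_le_mul]
      intro x hx y hy
      rw [Real.dist_eq, Real.dist_eq]
      calc |a x - a y| ≤ K * |x - y| := hlip x hx y hy
        _ ≤ (Real.toNNReal K : ℝ) * |x - y| :=
            mul_le_mul_of_nonneg_right (Real.le_coe_toNNReal K) (abs_nonneg _)
    exact hLip.continuousOn
  -- per-interval facts
  have hsub : ∀ j : ℕ, m ≤ j → j + 1 ≤ n →
      Set.Icc ((j:ℝ)/σ) (((j:ℝ)+1)/σ) ⊆ Set.Icc ((m:ℝ)/σ) ((n:ℝ)/σ) := by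
    intro j hj hj1
    have h1 : (m:ℝ) ≤ j := by exact_mod_cast hj
    have h2 : (j:ℝ) + 1 ≤ n := by exact_mod_cast hj1
    exact Set.Icc_subset_Icc ((div_le_div_iff_of_pos_right hσpos).2 h1) ((div_le_div_iff_of_pos_right hσpos).2 h2)
  have hcdle : ∀ j : ℕ, ((j:ℝ)/σ) ≤ (((j:ℝ)+1)/σ) :=
    fun j => (div_le_div_iff_of_pos_right hσpos).2 (by linarith)
  have hgint : ∀ j : ℕ, IntervalIntegrable (fun t => f ((σ:ℝ) * t)) volume
      ((j:ℝ)/σ) (((j:ℝ)+1)/σ) := by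
    intro j
    exact (hfj j).comp_mul_left (c := (σ:ℝ))
  have hgintabs : ∀ j : ℕ, IntervalIntegrable (fun t => |f ((σ:ℝ) * t)|) volume
      ((j:ℝ)/σ) (((j:ℝ)+1)/σ) := fun j => (hgint j).abs
  have haint : ∀ j : ℕ, m ≤ j → j + 1 ≤ n →
      IntervalIntegrable (fun t => a t * f ((σ:ℝ) * t)) volume ((j:ℝ)/σ) (((j:ℝ)+1)/σ) := by
    intro j hj hj1
    apply (hgint j).continuousOn_mul
    rw [Set.uIcc_of_le (hcdle j)]
    exact hacont.mono (hsub j hj hj1)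
  -- the key per-interval bound
  have key : ∀ j : ℕ, m ≤ j → j + 1 ≤ n →
      |∫ t in ((j:ℝ)/σ)..(((j:ℝ)+1)/σ), a t * f ((σ:ℝ) * t)| ≤ K / σ^2 * I := by
    intro j hj hj1
    set c : ℝ := (j:ℝ)/σ with hc
    set d : ℝ := ((j:ℝ)+1)/σ with hd
    have hcd : c ≤ d := hcdle j
    have hgI := hgint j
    have haI := haint j hj hj1
    have hacI : IntervalIntegrable (fun t => a c * f ((σ:ℝ) * t)) volume c d :=
      hgI.const_mul _
    have h2 : (σ:ℝ)*c = j := by rw [hc]; field_simp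
    have h3 : (σ:ℝ)*d = (j:ℝ)+1 := by rw [hd]; field_simp
    -- the constant part integrates to zero
    have hzero : (∫ t in c..d, a c * f ((σ:ℝ) * t)) = 0 := by
      rw [intervalIntegral.integral_const_mul]
      have h1 : (∫ t in c..d, f ((σ:ℝ) * t)) = (σ:ℝ)⁻¹ • ∫ x in ((σ:ℝ)*c)..((σ:ℝ)*d), f x :=
        intervalIntegral.integral_comp_mul_left f hσne
      rw [h1, h2, h3, hmeanj j]
      simp
    have hsplit : (∫ t in c..d, a t * f ((σ:ℝ) * t))
        = ∫ t in c..d, (a t - a c) * f ((σ:ℝ) * t) := by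
      have h := intervalIntegral.integral_sub haI hacI
      simp only [← sub_mul] at h
      rw [h, hzero, sub_zero]
    rw [hsplit]
    have hdiffI : IntervalIntegrable (fun t => (a t - a c) * f ((σ:ℝ) * t)) volume c d := by
      have h := haI.sub hacI
      simpa [sub_mul] using h
    calc |∫ t in c..d, (a t - a c) * f ((σ:ℝ) * t)|
        ≤ ∫ t in c..d, |(a t - a c) * f ((σ:ℝ) * t)| :=
          intervalIntegral.abs_integral_le_integral_abs hcd
      _ ≤ ∫ t in c..d, (K/σ) * |f ((σ:ℝ) * t)| := by
          apply intervalIntegral.integral_mono_on hcd hdiffI.abs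
            ((hgintabs j).const_mul _)
          intro x hx
          rw [abs_mul]
          apply mul_le_mul_of_nonneg_right _ (abs_nonneg _)
          have hmem : x ∈ Set.Icc ((m:ℝ)/σ) ((n:ℝ)/σ) := hsub j hj hj1 hx
          have hmemc : c ∈ Set.Icc ((m:ℝ)/σ) ((n:ℝ)/σ) :=
            hsub j hj hj1 ⟨le_refl _, hcd⟩
          have hdc : d - c = 1/σ := by rw [hc, hd]; field_simp; ring
          calc |a x - a c| ≤ K * |x - c| := hlip x hmem c hmemc
            _ ≤ K * (1/σ) := by
                apply mul_le_mul_of_nonneg_left _ hK0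
                rw [abs_of_nonneg (by linarith [hx.1] : 0 ≤ x - c)]
                linarith [hx.2]
            _ = K/σ := by ring
      _ = (K/σ) * ∫ t in c..d, |f ((σ:ℝ) * t)| := intervalIntegral.integral_const_mul _ _
      _ = K / σ^2 * I := by
          have h1 : (∫ t in c..d, |f ((σ:ℝ) * t)|)
              = (σ:ℝ)⁻¹ • ∫ x in ((σ:ℝ)*c)..((σ:ℝ)*d), |f x| :=
            intervalIntegral.integral_comp_mul_left (fun x => |f x|) hσne
          rw [h1, h2, h3, habsj j, smul_eq_mul]
          ring
  -- sum over subintervals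
  set N : ℕ := n - m with hN
  set p : ℕ → ℝ := fun k => ((m + k : ℕ) : ℝ)/σ with hp
  have hintk : ∀ k, k < N → IntervalIntegrable
      (fun t => a t * f ((σ:ℝ) * t)) volume (p k) (p (k+1)) := by
    intro k hk
    have h1 : m ≤ m + k := Nat.le_add_right _ _
    have h2 : (m + k) + 1 ≤ n := by omega
    have h := haint (m + k) h1 h2
    have e1 : p k = ((m + k : ℕ):ℝ)/σ := rfl
    have e2 : p (k+1) = (((m + k : ℕ):ℝ)+1)/σ := by
      simp only [hp]; congr 1; push_cast; ring
    rw [e1, e2]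
    exact h
  have hsum := intervalIntegral.sum_integral_adjacent_intervals hintk
  have hp0 : p 0 = (m:ℝ)/σ := by simp [hp]
  have hpN : p N = (n:ℝ)/σ := by
    simp only [hp]
    congr 1
    rw [Nat.cast_add, hN, Nat.cast_sub hmn.le]
    ring
  rw [← hp0, ← hpN, ← hsum]
  calc |∑ k ∈ Finset.range N, ∫ x in p k..p (k+1), a x * f ((σ:ℝ) * x)|
      ≤ ∑ k ∈ Finset.range N, |∫ x in p k..p (k+1), a x * f ((σ:ℝ) * x)| :=
        Finset.abs_sum_le_sum_abs _ _
    _ ≤ ∑ k ∈ Finset.range N, K / σ^2 * I := by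
        apply Finset.sum_le_sum
        intro k hk
        rw [Finset.mem_range] at hk
        have h1 : m ≤ m + k := Nat.le_add_right _ _
        have h2 : (m + k) + 1 ≤ n := by omega
        have hb := key (m + k) h1 h2
        have e1 : p k = ((m + k : ℕ):ℝ)/σ := rfl
        have e2 : p (k+1) = (((m + k : ℕ):ℝ)+1)/σ := by
          simp only [hp]; congr 1; push_cast; ring
        rw [e1, e2]
        exact hb
    _ = (N:ℝ) * (K / σ^2 * I) := by rw [Finset.sum_const, Finset.card_range]; ring
    _ = (((n : ℝ) - m) / (σ : ℝ) ^ 2) * K * I := by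
        have hNe : (N:ℝ) = (n:ℝ) - m := by
          rw [hN]; push_cast [Nat.cast_sub hmn.le]; ring
        rw [hNe]; ring
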